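/- Let ρ be a quantum state on ℂ^{d_A} ⊗ ℂ^{d_B} with marginals ρ_A = tr_B ρ and ρ_B = tr_A ρ, and let M_A = (M_j)_{j∈J} be a POVM on ℂ^{d_A}. Set p_j = tr((M_j ⊗ I_B)ρ), and for each j with p_j > 0 let ρ_j = tr_A((M_j ⊗ I_B)ρ)/p_j be the conditional state on ℂ^{d_B}. Then S_{M_A}(A|B)_ρ = S_{M_A}(ρ_A) − S(ρ_B) + ∑_{j: p_j>0} p_j S(ρ_j). -/

import Mathlib

open scoped BigOperators ComplexOrder Classical

noncomputable section

/-- Shannon entropy of a finitely supported distribution, with `0 log 0 = 0`. -/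
def shannonEntropy {ι : Type*} [Fintype ι] (p : ι → ℝ) : ℝ :=
  -∑ i, p i * Real.log (p i)

/-- A quantum state: positive semidefinite with unit trace. -/
def IsState {n : Type*} [Fintype n] (ρ : Matrix n n ℂ) : Prop :=
  ρ.PosSemidef ∧ ρ.trace = 1

/-- A POVM: positive semidefinite elements summing to the identity. -/
def IsPOVM {ι n : Type*} [Fintype ι] [Fintype n] [DecidableEq n]
    (M : ι → Matrix n n ℂ) : Prop :=
  (∀ i, (M i).PosSemidef) ∧ ∑ i, M i = 1

/-- Observational entropy `S_M(ρ) = -∑ p_i log (p_i / V_i)`. -/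
def obsEntropy {ι n : Type*} [Fintype ι] [Fintype n]
    (M : ι → Matrix n n ℂ) (ρ : Matrix n n ℂ) : ℝ :=
  -∑ i, ((M i * ρ).trace.re * Real.log ((M i * ρ).trace.re / (M i).trace.re))

/-- The function `g(x) = -x log x + (1+x) log(1+x)`. -/
def gFun (x : ℝ) : ℝ := -(x * Real.log x) + (1 + x) * Real.log (1 + x)

/-- Trace norm of a square complex matrix. -/
def traceNorm {n : Type*} [Fintype n] [DecidableEq n] (X : Matrix n n ℂ) : ℝ :=
  (((Matrix.posSemidef_conjTranspose_mul_self X).1.eigenvectorUnitary : Matrix n n ℂ) *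
    Matrix.diagonal (((↑) : ℝ → ℂ) ∘ (Real.sqrt ·) ∘ (Matrix.posSemidef_conjTranspose_mul_self X).1.eigenvalues) *
    (star ((Matrix.posSemidef_conjTranspose_mul_self X).1.eigenvectorUnitary : Matrix n n ℂ))).trace.re

/-- Matrix logarithm of a Hermitian matrix via the spectral decomposition,
with the convention `log 0 = 0` on the kernel; junk value `0` on non-Hermitian input. -/
def matLog {n : Type*} [Fintype n] [DecidableEq n] (A : Matrix n n ℂ) : Matrix n n ℂ :=
  if hA : A.IsHermitian then
    (hA.eigenvectorUnitary : Matrix n n ℂ) *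
      Matrix.diagonal (fun i => (Real.log (hA.eigenvalues i) : ℂ)) *
      (star (hA.eigenvectorUnitary : Matrix n n ℂ))
  else 0

/-- Von Neumann entropy `S(ρ) = -tr(ρ log ρ)`. -/
def vnEntropy {n : Type*} [Fintype n] [DecidableEq n] (ρ : Matrix n n ℂ) : ℝ :=
  -((ρ * matLog ρ).trace.re)

/-- Quantum relative entropy, as an extended real number: `tr(μ (log μ - log ν))` when
`supp μ ⊆ supp ν` (both Hermitian), and `+∞` otherwise. -/
def qRelEntropy {n : Type*} [Fintype n] [DecidableEq n] (μ ν : Matrix n n ℂ) : EReal :=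
  if μ.IsHermitian ∧ ν.IsHermitian ∧
      LinearMap.range (Matrix.toLin' μ) ≤ LinearMap.range (Matrix.toLin' ν) then
    (((μ * (matLog μ - matLog ν)).trace.re : ℝ) : EReal)
  else ⊤

/-- Real-valued quantum relative entropy `tr(μ (log μ - log ν))` (meaningful when
`supp μ ⊆ supp ν`). -/
def qRelEntropyR {n : Type*} [Fintype n] [DecidableEq n] (μ ν : Matrix n n ℂ) : ℝ :=
  (μ * (matLog μ - matLog ν)).trace.re


/-- Partial trace over the first (A) tensor factor. -/
def ptraceA {dA dB : ℕ} (X : Matrix (Fin dA × Fin dB) (Fin dA × Fin dB) ℂ) :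
    Matrix (Fin dB) (Fin dB) ℂ :=
  Matrix.of fun b b' => ∑ a, X (a, b) (a, b')

/-- Partial trace over the second (B) tensor factor. -/
def ptraceB {dA dB : ℕ} (X : Matrix (Fin dA × Fin dB) (Fin dA × Fin dB) ℂ) :
    Matrix (Fin dA) (Fin dA) ℂ :=
  Matrix.of fun a a' => ∑ b, X (a, b) (a', b)

/-- The channel `Φ_{M_A} ⊗ id_B`, measuring the A factor with the POVM `M` and keeping B:
`X ↦ ∑_j |j⟩⟨j| ⊗ tr_A((M_j ⊗ I_B) X)`. -/
def measureA {dA dB : ℕ} {J : Type*} [Fintype J] [DecidableEq J]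
    (M : J → Matrix (Fin dA) (Fin dA) ℂ)
    (X : Matrix (Fin dA × Fin dB) (Fin dA × Fin dB) ℂ) :
    Matrix (J × Fin dB) (J × Fin dB) ℂ :=
  Matrix.of fun p q =>
    if p.1 = q.1 then ∑ a, ∑ a', (M p.1) a a' * X (a', p.2) (a, q.2) else 0

/-- Conditional observational entropy
`S_{M_A}(A|B)_ρ = -D((Φ_{M_A} ⊗ id_B)(ρ) ‖ (Φ_{M_A} ⊗ id_B)(I_A ⊗ ρ_B))`. -/
def condObsEntropy {dA dB : ℕ} {J : Type*} [Fintype J] [DecidableEq J]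
    (M : J → Matrix (Fin dA) (Fin dA) ℂ)
    (ρ : Matrix (Fin dA × Fin dB) (Fin dA × Fin dB) ℂ) : EReal :=
  - qRelEntropy (measureA M ρ)
      (measureA M (Matrix.kroneckerMap (· * ·) (1 : Matrix (Fin dA) (Fin dA) ℂ) (ptraceA ρ)))


namespace OEAux
open Matrix Polynomial

variable {n : Type*} [Fintype n] [DecidableEq n]

/-- Conjugation by a unitary as an algebra homomorphism. -/
def conjAlgHom (V : Matrix.unitaryGroup n ℂ) : Matrix n n ℂ →ₐ[ℂ] Matrix n n ℂ where
  toFun X := (V : Matrix n n ℂ) * X * (star V : Matrix n n ℂ)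
  map_one' := by simpa using (unitary.coe_mul_star_self V)
  map_mul' X Y := by
    have h : (star V : Matrix n n ℂ) * (V : Matrix n n ℂ) = 1 := Unitary.coe_star_mul_self V
    calc (V : Matrix n n ℂ) * (X * Y) * (star V : Matrix n n ℂ)
        = (V : Matrix n n ℂ) * (X * (((star V : Matrix n n ℂ) * (V : Matrix n n ℂ)) * (Y * (star V : Matrix n n ℂ)))) := by
          rw [h, one_mul]; noncomm_ring
      _ = _ := by noncomm_ring
  map_zero' := by simp
  map_add' X Y := by noncomm_ring
  commutes' c := by
    simp only [Algebra.algebraMap_eq_smul_one]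
    rw [Matrix.mul_smul, Matrix.smul_mul, mul_one, Unitary.mul_star_self_of_mem V.2]

lemma aeval_conj (V : Matrix.unitaryGroup n ℂ) (B : Matrix n n ℂ) (p : ℂ[X]) :
    aeval ((V : Matrix n n ℂ) * B * (star V : Matrix n n ℂ)) p
      = (V : Matrix n n ℂ) * aeval B p * (star V : Matrix n n ℂ) :=
  aeval_algHom_apply (conjAlgHom V) B p

lemma aeval_diagonal (d : n → ℂ) (p : ℂ[X]) :
    aeval (Matrix.diagonal d) p = Matrix.diagonal (fun i => aeval (d i) p) := by
  have h := aeval_algHom_apply (Matrix.diagonalAlgHom (α := ℂ) (n := n) ℂ) d p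
  have h2 : ∀ i, (aeval d p) i = aeval (d i) p := fun i =>
    (aeval_algHom_apply (Pi.evalAlgHom ℂ (fun _ : n => ℂ) i) d p).symm
  calc aeval (Matrix.diagonal d) p = Matrix.diagonal (aeval d p) := h
    _ = Matrix.diagonal (fun i => aeval (d i) p) := by rw [funext h2]

lemma aeval_map_ofReal (p : ℝ[X]) (x : ℝ) :
    aeval ((x : ℂ)) (p.map (algebraMap ℝ ℂ)) = ((p.eval x : ℝ) : ℂ) := by
  have : ((x : ℝ) : ℂ) = algebraMap ℝ ℂ x := rfl
  rw [this, aeval_map_algebraMap, aeval_algebraMap_apply]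
  simp

/-- Apply a real function to a Hermitian matrix via spectral decomposition. -/
def matFun (f : ℝ → ℝ) (A : Matrix n n ℂ) : Matrix n n ℂ :=
  if hA : A.IsHermitian then
    (hA.eigenvectorUnitary : Matrix n n ℂ) *
      Matrix.diagonal (fun i => ((f (hA.eigenvalues i) : ℝ) : ℂ)) *
      (star (hA.eigenvectorUnitary : Matrix n n ℂ))
  else 0

lemma isHermitian_of_decomp (V : Matrix.unitaryGroup n ℂ) (d : n → ℝ) :
    ((V : Matrix n n ℂ) * Matrix.diagonal (fun i => ((d i : ℝ) : ℂ)) *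
      (star (V : Matrix n n ℂ))).IsHermitian := by
  have hD : (Matrix.diagonal (fun i => ((d i : ℝ) : ℂ)))ᴴ
      = Matrix.diagonal (fun i => ((d i : ℝ) : ℂ)) := by
    rw [Matrix.diagonal_conjTranspose]
    congr 1
    funext i
    simp [Pi.star_def, Complex.conj_ofReal]
  simp [Matrix.IsHermitian, Matrix.star_eq_conjTranspose, conjTranspose_mul,
    Matrix.mul_assoc, hD]

lemma aeval_decomp (V : Matrix.unitaryGroup n ℂ) (d : n → ℝ) (q : Polynomial ℝ) :
    Polynomial.aeval ((V : Matrix n n ℂ) * Matrix.diagonal (fun i => ((d i : ℝ) : ℂ)) *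
        (star (V : Matrix n n ℂ))) (q.map (algebraMap ℝ ℂ))
      = (V : Matrix n n ℂ) * Matrix.diagonal (fun i => ((q.eval (d i) : ℝ) : ℂ)) *
        (star (V : Matrix n n ℂ)) := by
  rw [aeval_conj, aeval_diagonal]
  have : (fun i => Polynomial.aeval ((d i : ℂ)) (q.map (algebraMap ℝ ℂ)))
      = fun i => ((q.eval (d i) : ℝ) : ℂ) := funext fun i => aeval_map_ofReal q (d i)
  rw [this]

/-- Key uniqueness: `matFun` can be computed from any unitary diagonalization. -/
lemma matFun_eq (f : ℝ → ℝ) {A : Matrix n n ℂ} (V : Matrix.unitaryGroup n ℂ) (d : n → ℝ)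
    (hdec : A = (V : Matrix n n ℂ) * Matrix.diagonal (fun i => ((d i : ℝ) : ℂ)) *
      (star (V : Matrix n n ℂ))) :
    matFun f A = (V : Matrix n n ℂ) * Matrix.diagonal (fun i => ((f (d i) : ℝ) : ℂ)) *
      (star (V : Matrix n n ℂ)) := by
  have hA : A.IsHermitian := hdec ▸ isHermitian_of_decomp V d
  set U := hA.eigenvectorUnitary with hU
  set e := hA.eigenvalues with he
  have hdec2 : A = (U : Matrix n n ℂ) * Matrix.diagonal (fun i => ((e i : ℝ) : ℂ)) *
      (star (U : Matrix n n ℂ)) := by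
    have := hA.spectral_theorem
    rw [Unitary.conjStarAlgAut_apply] at this
    exact this
  classical
  set s : Finset ℝ := (Finset.univ.image d) ∪ (Finset.univ.image e) with hs
  have hinj : Set.InjOn (id : ℝ → ℝ) (s : Set ℝ) := Function.injective_id.injOn
  set q : Polynomial ℝ := Lagrange.interpolate s id f with hq
  have hqe : ∀ x ∈ s, q.eval x = f x := by
    intro x hx
    exact Lagrange.eval_interpolate_at_node f hinj hx
  have h1 : Polynomial.aeval A (q.map (algebraMap ℝ ℂ))
      = (V : Matrix n n ℂ) * Matrix.diagonal (fun i => ((f (d i) : ℝ) : ℂ)) *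
        (star (V : Matrix n n ℂ)) := by
    rw [hdec, aeval_decomp]
    have : (fun i => ((q.eval (d i) : ℝ) : ℂ)) = fun i => ((f (d i) : ℝ) : ℂ) := funext fun i => by
      rw [hqe (d i) (Finset.mem_union_left _ (Finset.mem_image_of_mem d (Finset.mem_univ i)))]
    rw [this]
  have h2 : Polynomial.aeval A (q.map (algebraMap ℝ ℂ))
      = (U : Matrix n n ℂ) * Matrix.diagonal (fun i => ((f (e i) : ℝ) : ℂ)) *
        (star (U : Matrix n n ℂ)) := by
    rw [hdec2, aeval_decomp]
    have : (fun i => ((q.eval (e i) : ℝ) : ℂ)) = fun i => ((f (e i) : ℝ) : ℂ) := funext fun i => by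
      rw [hqe (e i) (Finset.mem_union_right _ (Finset.mem_image_of_mem e (Finset.mem_univ i)))]
    rw [this]
  have : matFun f A = (U : Matrix n n ℂ) * Matrix.diagonal (fun i => ((f (e i) : ℝ) : ℂ)) *
      (star (U : Matrix n n ℂ)) := by
    rw [matFun, dif_pos hA]
  rw [this, ← h2, h1]

lemma star_mul_self (V : Matrix.unitaryGroup n ℂ) :
    (star (V : Matrix n n ℂ)) * (V : Matrix n n ℂ) = 1 := Unitary.star_mul_self_of_mem V.2

lemma mul_star_self (V : Matrix.unitaryGroup n ℂ) :
    (V : Matrix n n ℂ) * (star (V : Matrix n n ℂ)) = 1 := Unitary.mul_star_self_of_mem V.2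

lemma conj_diag_mul (V : Matrix.unitaryGroup n ℂ) (c d : n → ℂ) :
    ((V : Matrix n n ℂ) * Matrix.diagonal c * star (V : Matrix n n ℂ)) *
      ((V : Matrix n n ℂ) * Matrix.diagonal d * star (V : Matrix n n ℂ))
    = (V : Matrix n n ℂ) * Matrix.diagonal (fun i => c i * d i) * star (V : Matrix n n ℂ) := by
  have h := star_mul_self V
  calc ((V : Matrix n n ℂ) * Matrix.diagonal c * star (V : Matrix n n ℂ)) *
      ((V : Matrix n n ℂ) * Matrix.diagonal d * star (V : Matrix n n ℂ))
      = (V : Matrix n n ℂ) * (Matrix.diagonal c *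
        ((star (V : Matrix n n ℂ) * (V : Matrix n n ℂ)) * Matrix.diagonal d)) *
          star (V : Matrix n n ℂ) := by noncomm_ring
    _ = _ := by rw [h, one_mul, Matrix.diagonal_mul_diagonal, Matrix.mul_assoc]

lemma conj_diag_add (V : Matrix.unitaryGroup n ℂ) (c d : n → ℂ) :
    ((V : Matrix n n ℂ) * Matrix.diagonal c * star (V : Matrix n n ℂ)) +
      ((V : Matrix n n ℂ) * Matrix.diagonal d * star (V : Matrix n n ℂ))
    = (V : Matrix n n ℂ) * Matrix.diagonal (fun i => c i + d i) * star (V : Matrix n n ℂ) := by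
  have : Matrix.diagonal (fun i => c i + d i) = Matrix.diagonal c + Matrix.diagonal d := by
    rw [Matrix.diagonal_add]
  rw [this]; noncomm_ring

lemma conj_diag_smul (V : Matrix.unitaryGroup n ℂ) (a : ℂ) (c : n → ℂ) :
    a • ((V : Matrix n n ℂ) * Matrix.diagonal c * star (V : Matrix n n ℂ))
    = (V : Matrix n n ℂ) * Matrix.diagonal (fun i => a * c i) * star (V : Matrix n n ℂ) := by
  have : Matrix.diagonal (fun i => a * c i) = a • Matrix.diagonal c := by
    ext i j
    by_cases h : i = j <;> simp [Matrix.diagonal_apply, h]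
  rw [this, Matrix.mul_smul, Matrix.smul_mul]

lemma conj_diag_trace (V : Matrix.unitaryGroup n ℂ) (c : n → ℂ) :
    ((V : Matrix n n ℂ) * Matrix.diagonal c * star (V : Matrix n n ℂ)).trace = ∑ i, c i := by
  rw [Matrix.trace_mul_comm, ← Matrix.mul_assoc, star_mul_self, one_mul, Matrix.trace_diagonal]

/-- Canonical spectral decomposition in `Complex.ofReal` form. -/
lemma decomp_self {A : Matrix n n ℂ} (hA : A.IsHermitian) :
    A = (hA.eigenvectorUnitary : Matrix n n ℂ) *
      Matrix.diagonal (fun i => ((hA.eigenvalues i : ℝ) : ℂ)) *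
      (star (hA.eigenvectorUnitary : Matrix n n ℂ)) := by
  have := hA.spectral_theorem
  rw [Unitary.conjStarAlgAut_apply] at this
  exact this

lemma matFun_decomp (f : ℝ → ℝ) {A : Matrix n n ℂ} (hA : A.IsHermitian) :
    matFun f A = (hA.eigenvectorUnitary : Matrix n n ℂ) *
      Matrix.diagonal (fun i => ((f (hA.eigenvalues i) : ℝ) : ℂ)) *
      (star (hA.eigenvectorUnitary : Matrix n n ℂ)) := by
  rw [matFun, dif_pos hA]

lemma matFun_isHermitian (f : ℝ → ℝ) {A : Matrix n n ℂ} (hA : A.IsHermitian) :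
    (matFun f A).IsHermitian := by
  rw [matFun_decomp f hA]; exact isHermitian_of_decomp _ _

lemma matFun_id {A : Matrix n n ℂ} (hA : A.IsHermitian) : matFun (fun x => x) A = A := by
  rw [matFun_decomp _ hA]; exact (decomp_self hA).symm

lemma matFun_mul {A : Matrix n n ℂ} (hA : A.IsHermitian) (f g : ℝ → ℝ) :
    matFun f A * matFun g A = matFun (fun x => f x * g x) A := by
  rw [matFun_decomp f hA, matFun_decomp g hA, matFun_decomp (fun x => f x * g x) hA,
    conj_diag_mul]
  congr 2
  funext i
  push_cast
  ring

lemma matFun_combine {A : Matrix n n ℂ} (hA : A.IsHermitian) (a : ℝ) (f g : ℝ → ℝ) :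
    matFun (fun x => a * f x + g x) A = ((a : ℝ) : ℂ) • matFun f A + matFun g A := by
  rw [matFun_decomp f hA, matFun_decomp g hA, matFun_decomp (fun x => a * f x + g x) hA,
    conj_diag_smul, conj_diag_add]
  congr 2
  funext i
  push_cast
  ring

lemma matFun_zero' {A : Matrix n n ℂ} (hA : A.IsHermitian) : matFun (fun _ => 0) A = 0 := by
  rw [matFun_decomp _ hA]
  have : Matrix.diagonal (fun _ : n => ((0 : ℝ) : ℂ)) = 0 := by
    push_cast; exact Matrix.diagonal_zero
  rw [this, Matrix.mul_zero, Matrix.zero_mul]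

lemma matFun_one' {A : Matrix n n ℂ} (hA : A.IsHermitian) : matFun (fun _ => 1) A = 1 := by
  rw [matFun_decomp _ hA]
  have : Matrix.diagonal (fun _ : n => ((1 : ℝ) : ℂ)) = 1 := by
    push_cast; exact Matrix.diagonal_one
  rw [this, Matrix.mul_one, mul_star_self]

lemma matFun_congr {A : Matrix n n ℂ} (hA : A.IsHermitian) {f g : ℝ → ℝ}
    (h : ∀ i, f (hA.eigenvalues i) = g (hA.eigenvalues i)) : matFun f A = matFun g A := by
  rw [matFun_decomp f hA, matFun_decomp g hA]
  have : (fun i => ((f (hA.eigenvalues i) : ℝ) : ℂ)) = fun i => ((g (hA.eigenvalues i) : ℝ) : ℂ) :=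
    funext fun i => by rw [h i]
  rw [this]

lemma matFun_congr_nonneg {A : Matrix n n ℂ} (hA : A.PosSemidef) {f g : ℝ → ℝ}
    (h : ∀ x, 0 ≤ x → f x = g x) : matFun f A = matFun g A :=
  matFun_congr hA.1 fun i => h _ (hA.eigenvalues_nonneg i)

lemma matFun_smul {A : Matrix n n ℂ} (hA : A.IsHermitian) (c : ℝ) (f : ℝ → ℝ) :
    matFun f (c • A) = matFun (fun x => f (c * x)) A := by
  have hdec : c • A = (hA.eigenvectorUnitary : Matrix n n ℂ) *
      Matrix.diagonal (fun i => ((c * hA.eigenvalues i : ℝ) : ℂ)) *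
      (star (hA.eigenvectorUnitary : Matrix n n ℂ)) := by
    have hr : c • A = ((c : ℝ) : ℂ) • A := by
      ext i j
      simp [Matrix.smul_apply, Complex.real_smul]
    have h2 := congrArg (fun X => (((c : ℝ) : ℂ)) • X) (decomp_self hA)
    rw [hr, h2, conj_diag_smul]
    have : (fun i => ((c : ℝ) : ℂ) * ((hA.eigenvalues i : ℝ) : ℂ))
        = fun i => ((c * hA.eigenvalues i : ℝ) : ℂ) := funext fun i => by push_cast; ring
    rw [this]
  rw [matFun_eq f _ _ hdec, matFun_decomp (fun x => f (c * x)) hA]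

lemma matFun_posSemidef {A : Matrix n n ℂ} (hA : A.IsHermitian) {f : ℝ → ℝ}
    (hf : ∀ x, 0 ≤ f x) : (matFun f A).PosSemidef := by
  rw [matFun_decomp f hA]
  have hd : (Matrix.diagonal (fun i => ((f (hA.eigenvalues i) : ℝ) : ℂ))).PosSemidef := by
    rw [Matrix.posSemidef_diagonal_iff]
    intro i
    rw [Complex.zero_le_real]
    exact hf _
  have := hd.mul_mul_conjTranspose_same (hA.eigenvectorUnitary : Matrix n n ℂ)
  rw [Matrix.star_eq_conjTranspose]
  exact this

def _root_.Matrix.PosSemidef.sqrt {A : Matrix n n ℂ} (_hA : A.PosSemidef) : Matrix n n ℂ :=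
  matFun Real.sqrt A

lemma _root_.Matrix.PosSemidef.posSemidef_sqrt {A : Matrix n n ℂ} (hA : A.PosSemidef) :
    hA.sqrt.PosSemidef :=
  matFun_posSemidef hA.1 Real.sqrt_nonneg

lemma _root_.Matrix.PosSemidef.sqrt_mul_self {A : Matrix n n ℂ} (hA : A.PosSemidef) :
    hA.sqrt * hA.sqrt = A := by
  rw [Matrix.PosSemidef.sqrt, matFun_mul hA.1]
  conv_rhs => rw [← matFun_id hA.1]
  exact matFun_congr_nonneg hA fun x hx => Real.mul_self_sqrt hx

lemma matLog_eq_matFun (A : Matrix n n ℂ) : matLog A = matFun Real.log A := rfl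

/-- Indicator of nonzero. -/
def chi (x : ℝ) : ℝ := if x = 0 then 0 else 1

lemma psd_trace_eq {A : Matrix n n ℂ} (hA : A.PosSemidef) :
    A.trace = ((∑ i, hA.1.eigenvalues i : ℝ) : ℂ) := by
  conv_lhs => rw [decomp_self hA.1]
  rw [conj_diag_trace]
  push_cast
  rfl

lemma psd_trace_re {A : Matrix n n ℂ} (hA : A.PosSemidef) :
    A.trace = ((A.trace.re : ℝ) : ℂ) := by
  rw [psd_trace_eq hA]
  simp

lemma psd_trace_re_nonneg {A : Matrix n n ℂ} (hA : A.PosSemidef) : 0 ≤ A.trace.re := by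
  rw [psd_trace_eq hA]
  simp only [Complex.ofReal_re]
  exact Finset.sum_nonneg fun i _ => hA.eigenvalues_nonneg i

lemma psd_trace_zero {A : Matrix n n ℂ} (hA : A.PosSemidef) (h : A.trace = 0) : A = 0 := by
  have he : ∀ i, hA.1.eigenvalues i = 0 := by
    have hsum : (∑ i, hA.1.eigenvalues i) = 0 := by
      have := psd_trace_eq hA
      rw [h] at this
      exact_mod_cast this.symm
    intro i
    exact (Finset.sum_eq_zero_iff_of_nonneg (fun i _ => hA.eigenvalues_nonneg i)).mp hsum i
      (Finset.mem_univ i)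
  have := decomp_self hA.1
  rw [this]
  have hd : Matrix.diagonal (fun i => ((hA.1.eigenvalues i : ℝ) : ℂ)) = 0 := by
    have : (fun i => ((hA.1.eigenvalues i : ℝ) : ℂ)) = fun _ => 0 := funext fun i => by
      rw [he i]; simp
    rw [this]
    exact Matrix.diagonal_zero
  rw [hd, Matrix.mul_zero, Matrix.zero_mul]

lemma psd_mul_trace {P Q : Matrix n n ℂ} (hP : P.PosSemidef) (hQ : Q.PosSemidef) :
    (P * Q).trace = (((P * Q).trace.re : ℝ) : ℂ) ∧ 0 ≤ (P * Q).trace.re := by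
  have hs := hP.posSemidef_sqrt
  have h1 : P * Q = hP.sqrt * (hP.sqrt * Q) := by
    rw [← Matrix.mul_assoc, hP.sqrt_mul_self]
  have h2 : (P * Q).trace = (hP.sqrt * Q * hP.sqrt).trace := by
    rw [h1, Matrix.trace_mul_comm]
  have h3 : (hP.sqrt * Q * hP.sqrt).PosSemidef := by
    have := hQ.mul_mul_conjTranspose_same hP.sqrt
    rwa [hs.1.eq] at this
  constructor
  · rw [h2]; exact psd_trace_re h3
  · rw [h2]; exact psd_trace_re_nonneg h3

lemma one_sub_chi_matFun {B : Matrix n n ℂ} (hB : B.IsHermitian) :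
    (1 : Matrix n n ℂ) - matFun chi B = matFun (fun x => 1 - chi x) B := by
  have h : (fun x : ℝ => 1 - chi x) = fun x => (-1 : ℝ) * chi x + 1 := funext fun x => by ring
  rw [h, matFun_combine hB (-1) chi (fun _ => 1), matFun_one' hB]
  push_cast
  rw [neg_one_smul]
  abel

/-- Support absorption: if `0 ≤ A ≤ B` then the support projection of `B` absorbs `A`. -/
lemma supp_absorb {A B : Matrix n n ℂ} (hA : A.PosSemidef) (hB : B.PosSemidef)
    (hAB : (B - A).PosSemidef) : A * matFun chi B = A ∧ matFun chi B * A = A := by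
  set P := matFun chi B with hPdef
  set Q := (1 : Matrix n n ℂ) - P with hQdef
  have hQ : Q = matFun (fun x => 1 - chi x) B := one_sub_chi_matFun hB.1
  have hQpsd : Q.PosSemidef := by
    rw [hQ]
    exact matFun_posSemidef hB.1 fun x => by unfold chi; split <;> norm_num
  have hQQ : Q * Q = Q := by
    rw [hQ, matFun_mul hB.1]
    exact matFun_congr hB.1 fun i => by unfold chi; split <;> ring
  have hBQ : B * Q = 0 := by
    conv_lhs => rw [← matFun_id hB.1, hQ, matFun_mul hB.1]
    have : matFun (fun x => x * (1 - chi x)) B = matFun (fun _ => 0) B :=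
      matFun_congr hB.1 fun i => by unfold chi; split <;> simp_all
    rw [this, matFun_zero' hB.1]
  have hTpsd : (Q * A * Q).PosSemidef := by
    have := hA.mul_mul_conjTranspose_same Q
    rwa [hQpsd.1.eq] at this
  have hT2psd : (Q * (B - A) * Q).PosSemidef := by
    have := hAB.mul_mul_conjTranspose_same Q
    rwa [hQpsd.1.eq] at this
  have hsum : (Q * A * Q).trace + (Q * (B - A) * Q).trace = 0 := by
    have : Q * A * Q + Q * (B - A) * Q = Q * B * Q := by noncomm_ring
    have h4 : (Q * B * Q).trace = 0 := by
      rw [Matrix.trace_mul_comm, ← Matrix.mul_assoc, hQQ, Matrix.trace_mul_comm, hBQ,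
        Matrix.trace_zero]
    calc (Q * A * Q).trace + (Q * (B - A) * Q).trace = (Q * A * Q + Q * (B - A) * Q).trace :=
          (Matrix.trace_add _ _).symm
      _ = 0 := by rw [this, h4]
  have hTzero : Q * A * Q = 0 := by
    apply psd_trace_zero hTpsd
    have h1 := psd_trace_re hTpsd
    have h2 := psd_trace_re hT2psd
    have hre : (Q * A * Q).trace.re + (Q * (B - A) * Q).trace.re = 0 := by
      have := congrArg Complex.re hsum
      simpa using this
    have := le_antisymm
      (by linarith [psd_trace_re_nonneg hT2psd]) (psd_trace_re_nonneg hTpsd)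
    rw [h1, this]
    simp
  have hAQ : A * Q = 0 := by
    have hfact : Q * A * Q = (hA.sqrt * Q)ᴴ * (hA.sqrt * Q) := by
      rw [Matrix.conjTranspose_mul, hA.posSemidef_sqrt.1.eq, hQpsd.1.eq]
      calc Q * A * Q = Q * (hA.sqrt * hA.sqrt) * Q := by rw [hA.sqrt_mul_self]
        _ = Q * hA.sqrt * (hA.sqrt * Q) := by noncomm_ring
    have : hA.sqrt * Q = 0 := by
      rw [hfact] at hTzero
      exact Matrix.conjTranspose_mul_self_eq_zero.mp hTzero
    calc A * Q = hA.sqrt * (hA.sqrt * Q) := by rw [← Matrix.mul_assoc, hA.sqrt_mul_self]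
      _ = 0 := by rw [this, Matrix.mul_zero]
  have hAP : A * P = A := by
    have : A * ((1 : Matrix n n ℂ) - P) = 0 := hAQ
    rw [Matrix.mul_sub, Matrix.mul_one, sub_eq_zero] at this
    exact this.symm
  refine ⟨hAP, ?_⟩
  have := congrArg Matrix.conjTranspose hAP
  rwa [Matrix.conjTranspose_mul, hA.1.eq, (matFun_isHermitian chi hB.1).eq] at this

lemma range_le_of_supp {μ B : Matrix n n ℂ} (hB : B.PosSemidef) (h : matFun chi B * μ = μ) :
    LinearMap.range (Matrix.toLin' μ) ≤ LinearMap.range (Matrix.toLin' B) := by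
  have hP : matFun chi B = B * matFun (fun x => x⁻¹) B := by
    have hm := matFun_mul hB.1 (fun x => x) (fun x => x⁻¹)
    rw [matFun_id hB.1] at hm
    rw [hm]
    exact matFun_congr hB.1 fun i => by
      unfold chi
      rcases eq_or_ne (hB.1.eigenvalues i) 0 with h0 | h0
      · simp [h0]
      · simp [h0, mul_inv_cancel₀ h0]
  calc LinearMap.range (Matrix.toLin' μ)
      = LinearMap.range (Matrix.toLin' (matFun chi B * μ)) := by rw [h]
    _ ≤ LinearMap.range (Matrix.toLin' (matFun chi B)) := by
        rw [Matrix.toLin'_mul]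
        exact LinearMap.range_comp_le_range _ _
    _ = LinearMap.range (Matrix.toLin' (B * matFun (fun x => x⁻¹) B)) := by rw [← hP]
    _ ≤ LinearMap.range (Matrix.toLin' B) := by
        rw [Matrix.toLin'_mul]
        exact LinearMap.range_comp_le_range _ _

lemma matLog_smul_psd {B : Matrix n n ℂ} (hB : B.PosSemidef) {c : ℝ} (hc : 0 < c) :
    matLog (c • B) = ((Real.log c : ℝ) : ℂ) • matFun chi B + matLog B := by
  rw [matLog_eq_matFun, matLog_eq_matFun, matFun_smul hB.1]
  have h1 : matFun (fun x => Real.log (c * x)) B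
      = matFun (fun x => Real.log c * chi x + Real.log x) B :=
    matFun_congr_nonneg hB fun x hx => by
      rcases eq_or_lt_of_le hx with h | h
      · simp [chi, ← h]
      · simp [chi, ne_of_gt h, Real.log_mul (ne_of_gt hc) (ne_of_gt h)]
  rw [h1, matFun_combine hB.1]

lemma matFun_chi_smul {B : Matrix n n ℂ} (hB : B.PosSemidef) {c : ℝ} (hc : 0 < c) :
    matFun chi (c • B) = matFun chi B := by
  rw [matFun_smul hB.1]
  exact matFun_congr_nonneg hB fun x hx => by
    unfold chi
    rcases eq_or_ne x 0 with h0 | h0 <;> simp [h0, ne_of_gt hc, mul_eq_zero]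

lemma psd_mul_chi {A : Matrix n n ℂ} (hA : A.PosSemidef) : A * matFun chi A = A := by
  have hm := matFun_mul hA.1 (fun x => x) chi
  rw [matFun_id hA.1] at hm
  rw [hm]
  have h2 : matFun (fun x => x * chi x) A = matFun (fun x => x) A :=
    matFun_congr hA.1 fun i => by unfold chi; split <;> simp_all
  rw [h2, matFun_id hA.1]

section Block
variable {dB : ℕ} {J : Type*} [Fintype J] [DecidableEq J]

/-- Block-diagonal matrix over `J × Fin dB`. -/
def blockDiag (B : J → Matrix (Fin dB) (Fin dB) ℂ) : Matrix (J × Fin dB) (J × Fin dB) ℂ :=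
  Matrix.of fun p q => if p.1 = q.1 then B p.1 p.2 q.2 else 0

lemma blockDiag_apply (B : J → Matrix (Fin dB) (Fin dB) ℂ) (p q : J × Fin dB) :
    blockDiag B p q = if p.1 = q.1 then B p.1 p.2 q.2 else 0 := rfl

lemma blockDiag_mul (B C : J → Matrix (Fin dB) (Fin dB) ℂ) :
    blockDiag B * blockDiag C = blockDiag (fun j => B j * C j) := by
  ext p q
  rw [Matrix.mul_apply]
  rw [Fintype.sum_prod_type]
  simp only [blockDiag_apply]
  rcases eq_or_ne p.1 q.1 with h | h
  · rw [if_pos h]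
    rw [Finset.sum_eq_single p.1]
    · rw [Matrix.mul_apply]
      congr 1
      funext b
      rw [if_pos rfl, if_pos h]
    · intro k _ hk
      apply Finset.sum_eq_zero
      intro b _
      rw [if_neg (Ne.symm hk), zero_mul]
    · intro hk
      exact absurd (Finset.mem_univ p.1) hk
  · rw [if_neg h]
    apply Finset.sum_eq_zero
    intro k _
    apply Finset.sum_eq_zero
    intro b _
    rcases eq_or_ne p.1 k with hk | hk
    · rw [← hk, if_neg h, mul_zero]
    · rw [if_neg hk, zero_mul]

lemma blockDiag_add (B C : J → Matrix (Fin dB) (Fin dB) ℂ) :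
    blockDiag B + blockDiag C = blockDiag (fun j => B j + C j) := by
  ext p q
  simp only [Matrix.add_apply, blockDiag_apply]
  split <;> simp

lemma blockDiag_sub (B C : J → Matrix (Fin dB) (Fin dB) ℂ) :
    blockDiag B - blockDiag C = blockDiag (fun j => B j - C j) := by
  ext p q
  simp only [Matrix.sub_apply, blockDiag_apply]
  split <;> simp

lemma blockDiag_smul (a : ℂ) (B : J → Matrix (Fin dB) (Fin dB) ℂ) :
    a • blockDiag B = blockDiag (fun j => a • B j) := by
  ext p q
  simp only [Matrix.smul_apply, blockDiag_apply, smul_eq_mul]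
  split <;> simp

lemma blockDiag_conjTranspose (B : J → Matrix (Fin dB) (Fin dB) ℂ) :
    (blockDiag B)ᴴ = blockDiag (fun j => (B j)ᴴ) := by
  ext p q
  simp only [Matrix.conjTranspose_apply, blockDiag_apply]
  rcases eq_or_ne p.1 q.1 with h | h
  · rw [if_pos h, if_pos h.symm, h]
  · rw [if_neg h, if_neg (Ne.symm h), star_zero]

lemma blockDiag_one : blockDiag (fun _ : J => (1 : Matrix (Fin dB) (Fin dB) ℂ)) = 1 := by
  ext p q
  simp only [blockDiag_apply, Matrix.one_apply]
  rcases eq_or_ne p q with h | h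
  · subst h; simp
  · rcases eq_or_ne p.1 q.1 with h1 | h1
    · rw [if_pos h1, if_neg h]
      have h2 : p.2 ≠ q.2 := fun h2 => h (Prod.ext h1 h2)
      simp [h2]
    · rw [if_neg h1, if_neg h]

lemma blockDiag_diagonal (d : J → Fin dB → ℂ) :
    blockDiag (fun j => Matrix.diagonal (d j)) = Matrix.diagonal (fun p => d p.1 p.2) := by
  ext p q
  simp only [blockDiag_apply, Matrix.diagonal_apply]
  rcases eq_or_ne p q with h | h
  · subst h; simp
  · rcases eq_or_ne p.1 q.1 with h1 | h1
    · rw [if_pos h1, if_neg h]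
      have h2 : p.2 ≠ q.2 := fun h2 => h (Prod.ext h1 h2)
      simp [h2]
    · rw [if_neg h1, if_neg h]

lemma blockDiag_trace (B : J → Matrix (Fin dB) (Fin dB) ℂ) :
    (blockDiag B).trace = ∑ j, (B j).trace := by
  rw [Matrix.trace, Fintype.sum_prod_type]
  congr 1
  funext j
  rw [Matrix.trace]
  congr 1
  funext b
  simp [Matrix.diag, blockDiag_apply]

lemma blockDiag_unitary (U : J → Matrix.unitaryGroup (Fin dB) ℂ) :
    blockDiag (fun j => ((U j : Matrix (Fin dB) (Fin dB) ℂ)))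
      ∈ Matrix.unitaryGroup (J × Fin dB) ℂ := by
  constructor
  · rw [Matrix.star_eq_conjTranspose, blockDiag_conjTranspose, blockDiag_mul]
    have : (fun j => ((U j : Matrix (Fin dB) (Fin dB) ℂ))ᴴ * (U j : Matrix (Fin dB) (Fin dB) ℂ))
        = fun _ => (1 : Matrix (Fin dB) (Fin dB) ℂ) := funext fun j => by
      rw [← Matrix.star_eq_conjTranspose]
      exact star_mul_self (U j)
    rw [this, blockDiag_one]
  · rw [Matrix.star_eq_conjTranspose, blockDiag_conjTranspose, blockDiag_mul]
    have : (fun j => (U j : Matrix (Fin dB) (Fin dB) ℂ) * ((U j : Matrix (Fin dB) (Fin dB) ℂ))ᴴ)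
        = fun _ => (1 : Matrix (Fin dB) (Fin dB) ℂ) := funext fun j => by
      rw [← Matrix.star_eq_conjTranspose]
      exact mul_star_self (U j)
    rw [this, blockDiag_one]

lemma blockDiag_isHermitian {B : J → Matrix (Fin dB) (Fin dB) ℂ}
    (h : ∀ j, (B j).IsHermitian) : (blockDiag B).IsHermitian := by
  unfold Matrix.IsHermitian
  rw [blockDiag_conjTranspose]
  exact congrArg blockDiag (funext fun j => (h j).eq)

lemma blockDiag_posSemidef {B : J → Matrix (Fin dB) (Fin dB) ℂ}
    (h : ∀ j, (B j).PosSemidef) : (blockDiag B).PosSemidef := by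
  refine Matrix.PosSemidef.of_dotProduct_mulVec_nonneg (blockDiag_isHermitian fun j => (h j).1) fun x => ?_
  have hx : ∀ p : J × Fin dB, (blockDiag B *ᵥ x) p
      = (B p.1 *ᵥ fun b => x (p.1, b)) p.2 := by
    intro p
    rw [Matrix.mulVec, dotProduct, Fintype.sum_prod_type, Matrix.mulVec, dotProduct]
    rw [Finset.sum_eq_single p.1]
    · apply Finset.sum_congr rfl
      intro b _
      rw [blockDiag_apply, if_pos rfl]
    · intro k _ hk
      apply Finset.sum_eq_zero
      intro b _
      rw [blockDiag_apply, if_neg (Ne.symm hk), zero_mul]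
    · intro hk
      exact absurd (Finset.mem_univ p.1) hk
  have : dotProduct (star x) (blockDiag B *ᵥ x)
      = ∑ j, dotProduct (star fun b => x (j, b)) (B j *ᵥ fun b => x (j, b)) := by
    rw [dotProduct, Fintype.sum_prod_type]
    congr 1
    funext j
    rw [dotProduct]
    congr 1
    funext b
    rw [hx (j, b)]
    rfl
  rw [this]
  exact Finset.sum_nonneg fun j _ => (h j).dotProduct_mulVec_nonneg _

lemma matFun_blockDiag (f : ℝ → ℝ) {B : J → Matrix (Fin dB) (Fin dB) ℂ}
    (h : ∀ j, (B j).IsHermitian) :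
    matFun f (blockDiag B) = blockDiag (fun j => matFun f (B j)) := by
  set W : Matrix.unitaryGroup (J × Fin dB) ℂ :=
    ⟨blockDiag (fun j => (((h j).eigenvectorUnitary : Matrix (Fin dB) (Fin dB) ℂ))),
      blockDiag_unitary _⟩ with hW
  have hconj : ∀ g : ℝ → ℝ, (W : Matrix (J × Fin dB) (J × Fin dB) ℂ) *
      Matrix.diagonal (fun p : J × Fin dB => ((g ((h p.1).eigenvalues p.2) : ℝ) : ℂ)) *
      (star (W : Matrix (J × Fin dB) (J × Fin dB) ℂ))
      = blockDiag (fun j => ((h j).eigenvectorUnitary : Matrix (Fin dB) (Fin dB) ℂ) *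
        Matrix.diagonal (fun b => ((g ((h j).eigenvalues b) : ℝ) : ℂ)) *
        star ((h j).eigenvectorUnitary : Matrix (Fin dB) (Fin dB) ℂ)) := by
    intro g
    rw [hW]
    simp only [Matrix.star_eq_conjTranspose]
    rw [blockDiag_conjTranspose,
      ← blockDiag_diagonal (fun j b => ((g ((h j).eigenvalues b) : ℝ) : ℂ)),
      blockDiag_mul, blockDiag_mul]
  have hdec : blockDiag B = (W : Matrix (J × Fin dB) (J × Fin dB) ℂ) *
      Matrix.diagonal (fun p : J × Fin dB => ((((h p.1).eigenvalues p.2) : ℝ) : ℂ)) *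
      (star (W : Matrix (J × Fin dB) (J × Fin dB) ℂ)) := by
    rw [hconj (fun x => x)]
    exact congrArg blockDiag (funext fun j => decomp_self (h j))
  rw [matFun_eq f W _ hdec, hconj f]
  exact congrArg blockDiag (funext fun j => (matFun_decomp f (h j)).symm)

end Block

section Kron
variable {dA dB : ℕ}

local notation "kron" => Matrix.kroneckerMap (· * · : ℂ → ℂ → ℂ)

lemma ptraceA_apply (X : Matrix (Fin dA × Fin dB) (Fin dA × Fin dB) ℂ) (b b' : Fin dB) :
    ptraceA X b b' = ∑ a, X (a, b) (a, b') := rfl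

lemma ptraceB_apply (X : Matrix (Fin dA × Fin dB) (Fin dA × Fin dB) ℂ) (a a' : Fin dA) :
    ptraceB X a a' = ∑ b, X (a, b) (a', b) := rfl

lemma ptraceA_kron_mul (N : Matrix (Fin dA) (Fin dA) ℂ)
    (X : Matrix (Fin dA × Fin dB) (Fin dA × Fin dB) ℂ) (b b' : Fin dB) :
    ptraceA (kron N (1 : Matrix (Fin dB) (Fin dB) ℂ) * X) b b'
      = ∑ a, ∑ a2, N a a2 * X (a2, b) (a, b') := by
  rw [ptraceA_apply]
  apply Finset.sum_congr rfl
  intro a _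
  rw [Matrix.mul_apply, Fintype.sum_prod_type]
  apply Finset.sum_congr rfl
  intro a2 _
  rw [Finset.sum_eq_single b]
  · simp [Matrix.kroneckerMap_apply, Matrix.one_apply]
  · intro b2 _ hb2
    simp [Matrix.kroneckerMap_apply, Matrix.one_apply, Ne.symm hb2]
  · intro hb
    exact absurd (Finset.mem_univ b) hb

lemma measureA_eq_blockDiag {J : Type*} [Fintype J] [DecidableEq J]
    (M : J → Matrix (Fin dA) (Fin dA) ℂ)
    (X : Matrix (Fin dA × Fin dB) (Fin dA × Fin dB) ℂ) :
    measureA M X = blockDiag (fun j =>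
      ptraceA (kron (M j) (1 : Matrix (Fin dB) (Fin dB) ℂ) * X)) := by
  ext p q
  rw [measureA, blockDiag_apply, Matrix.of_apply]
  rcases eq_or_ne p.1 q.1 with h | h
  · rw [if_pos h, if_pos h, ptraceA_kron_mul]
  · rw [if_neg h, if_neg h]

lemma ptraceA_kron (N : Matrix (Fin dA) (Fin dA) ℂ) (σ : Matrix (Fin dB) (Fin dB) ℂ) :
    ptraceA (kron N σ) = N.trace • σ := by
  ext b b'
  rw [ptraceA_apply, Matrix.smul_apply, Matrix.trace, smul_eq_mul, Finset.sum_mul]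
  apply Finset.sum_congr rfl
  intro a _
  rfl

lemma kron_mul_kron_one (N : Matrix (Fin dA) (Fin dA) ℂ) (σ : Matrix (Fin dB) (Fin dB) ℂ) :
    kron N (1 : Matrix (Fin dB) (Fin dB) ℂ) * kron (1 : Matrix (Fin dA) (Fin dA) ℂ) σ
      = kron N σ := by
  rw [← Matrix.mul_kronecker_mul, Matrix.mul_one, Matrix.one_mul]

lemma ptraceA_sum {ι : Type*} [Fintype ι] (Y : ι → Matrix (Fin dA × Fin dB) (Fin dA × Fin dB) ℂ) :
    ptraceA (∑ j, Y j) = ∑ j, ptraceA (Y j) := by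
  ext b b'
  rw [ptraceA_apply]
  simp only [Matrix.sum_apply, ptraceA_apply]
  rw [Finset.sum_comm]

lemma ptraceA_trace (X : Matrix (Fin dA × Fin dB) (Fin dA × Fin dB) ℂ) :
    (ptraceA X).trace = X.trace := by
  rw [Matrix.trace, Matrix.trace, Fintype.sum_prod_type, Finset.sum_comm]
  apply Finset.sum_congr rfl
  intro b _
  rfl

lemma ptraceA_conjTranspose (X : Matrix (Fin dA × Fin dB) (Fin dA × Fin dB) ℂ) :
    (ptraceA X)ᴴ = ptraceA Xᴴ := by
  ext b b'
  rw [Matrix.conjTranspose_apply, ptraceA_apply, ptraceA_apply]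
  rw [star_sum]
  apply Finset.sum_congr rfl
  intro a _
  rfl

lemma quad_expand {m : Type*} [Fintype m] (Y : Matrix m m ℂ) (v : m → ℂ) :
    dotProduct (star v) (Y *ᵥ v) = ∑ p, ∑ q, star (v p) * Y p q * v q := by
  rw [dotProduct]
  apply Finset.sum_congr rfl
  intro p _
  rw [Matrix.mulVec, dotProduct, Finset.mul_sum]
  apply Finset.sum_congr rfl
  intro q _
  simp only [Pi.star_apply]
  ring

lemma ptraceA_posSemidef {Y : Matrix (Fin dA × Fin dB) (Fin dA × Fin dB) ℂ}
    (hY : Y.PosSemidef) : (ptraceA Y).PosSemidef := by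
  refine Matrix.PosSemidef.of_dotProduct_mulVec_nonneg ?_ ?_
  · unfold Matrix.IsHermitian
    rw [ptraceA_conjTranspose, hY.1.eq]
  · intro x
    have key : dotProduct (star x) (ptraceA Y *ᵥ x)
        = ∑ a : Fin dA, dotProduct
            (star fun p : Fin dA × Fin dB => if p.1 = a then x p.2 else 0)
            (Y *ᵥ fun p : Fin dA × Fin dB => if p.1 = a then x p.2 else 0) := by
      have hrhs : (∑ a : Fin dA, dotProduct
            (star fun p : Fin dA × Fin dB => if p.1 = a then x p.2 else 0)
            (Y *ᵥ fun p : Fin dA × Fin dB => if p.1 = a then x p.2 else 0))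
          = ∑ a : Fin dA, ∑ b, ∑ b', star (x b) * Y (a, b) (a, b') * x b' := by
        apply Finset.sum_congr rfl
        intro a _
        rw [quad_expand]
        simp only [Fintype.sum_prod_type, Pi.star_apply, apply_ite star, star_zero, ite_mul,
          zero_mul, mul_ite, mul_zero, Finset.sum_ite_irrel, Finset.sum_const_zero,
          Finset.sum_ite_eq', Finset.mem_univ, if_true]
      have hlhs : dotProduct (star x) (ptraceA Y *ᵥ x)
          = ∑ b, ∑ b', ∑ a, star (x b) * Y (a, b) (a, b') * x b' := by
        rw [quad_expand]
        apply Finset.sum_congr rfl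
        intro b _
        apply Finset.sum_congr rfl
        intro b' _
        rw [ptraceA_apply, Finset.mul_sum, Finset.sum_mul]
      rw [hlhs, hrhs]
      calc ∑ b, ∑ b', ∑ a, star (x b) * Y (a, b) (a, b') * x b'
          = ∑ b, ∑ a, ∑ b', star (x b) * Y (a, b) (a, b') * x b' :=
            Finset.sum_congr rfl fun b _ => Finset.sum_comm
        _ = ∑ a : Fin dA, ∑ b, ∑ b', star (x b) * Y (a, b) (a, b') * x b' :=
            Finset.sum_comm
    rw [key]
    exact Finset.sum_nonneg fun a _ => hY.dotProduct_mulVec_nonneg _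

lemma ptraceA_cyclic (N : Matrix (Fin dA) (Fin dA) ℂ)
    (Z : Matrix (Fin dA × Fin dB) (Fin dA × Fin dB) ℂ) :
    ptraceA (kron N (1 : Matrix (Fin dB) (Fin dB) ℂ) * Z)
      = ptraceA (Z * kron N (1 : Matrix (Fin dB) (Fin dB) ℂ)) := by
  ext b b'
  rw [ptraceA_kron_mul, ptraceA_apply]
  have hrhs : ∀ a : Fin dA, (Z * kron N (1 : Matrix (Fin dB) (Fin dB) ℂ)) (a, b) (a, b')
      = ∑ a2, Z (a, b) (a2, b') * N a2 a := by
    intro a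
    rw [Matrix.mul_apply, Fintype.sum_prod_type]
    apply Finset.sum_congr rfl
    intro a2 _
    rw [Finset.sum_eq_single b']
    · simp [Matrix.kroneckerMap_apply, Matrix.one_apply]
    · intro b2 _ hb2
      simp [Matrix.kroneckerMap_apply, Matrix.one_apply, hb2]
    · intro hb
      exact absurd (Finset.mem_univ b') hb
  rw [Finset.sum_congr rfl fun a _ => hrhs a]
  rw [Finset.sum_comm]
  apply Finset.sum_congr rfl
  intro a _
  apply Finset.sum_congr rfl
  intro a2 _
  ring


lemma kron_one_conjTranspose (N : Matrix (Fin dA) (Fin dA) ℂ) :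
    (kron N (1 : Matrix (Fin dB) (Fin dB) ℂ))ᴴ
      = kron Nᴴ (1 : Matrix (Fin dB) (Fin dB) ℂ) := by
  ext p q
  simp only [Matrix.conjTranspose_apply, Matrix.kroneckerMap_apply]
  rw [star_mul']
  congr 1
  simp only [Matrix.one_apply, apply_ite star, star_one, star_zero]
  simp [eq_comm]

lemma ptraceA_kron_mul_posSemidef {N : Matrix (Fin dA) (Fin dA) ℂ} (hN : N.PosSemidef)
    {X : Matrix (Fin dA × Fin dB) (Fin dA × Fin dB) ℂ} (hX : X.PosSemidef) :
    (ptraceA (kron N (1 : Matrix (Fin dB) (Fin dB) ℂ) * X)).PosSemidef := by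
  set S := hN.sqrt with hS
  have hSh : Sᴴ = S := hN.posSemidef_sqrt.1.eq
  have hNS : N = S * S := (hN.sqrt_mul_self).symm
  have h1 : kron N (1 : Matrix (Fin dB) (Fin dB) ℂ)
      = kron S (1 : Matrix (Fin dB) (Fin dB) ℂ) * kron S (1 : Matrix (Fin dB) (Fin dB) ℂ) := by
    rw [← Matrix.mul_kronecker_mul, Matrix.one_mul, ← hNS]
  have h2 : ptraceA (kron N (1 : Matrix (Fin dB) (Fin dB) ℂ) * X)
      = ptraceA (kron S (1 : Matrix (Fin dB) (Fin dB) ℂ) * X *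
          kron S (1 : Matrix (Fin dB) (Fin dB) ℂ)) := by
    rw [h1, Matrix.mul_assoc, ptraceA_cyclic, Matrix.mul_assoc]
  rw [h2]
  apply ptraceA_posSemidef
  have h3 : kron S (1 : Matrix (Fin dB) (Fin dB) ℂ) * X * kron S (1 : Matrix (Fin dB) (Fin dB) ℂ)
      = kron S (1 : Matrix (Fin dB) (Fin dB) ℂ) * X *
          (kron S (1 : Matrix (Fin dB) (Fin dB) ℂ))ᴴ := by
    rw [kron_one_conjTranspose, hSh]
  rw [h3]
  exact hX.mul_mul_conjTranspose_same _

lemma kron_mul_trace (N : Matrix (Fin dA) (Fin dA) ℂ)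
    (X : Matrix (Fin dA × Fin dB) (Fin dA × Fin dB) ℂ) :
    (kron N (1 : Matrix (Fin dB) (Fin dB) ℂ) * X).trace = (N * ptraceB X).trace := by
  rw [← ptraceA_trace, Matrix.trace]
  rw [Matrix.trace]
  have : ∀ b, (ptraceA (kron N (1 : Matrix (Fin dB) (Fin dB) ℂ) * X)).diag b
      = ∑ a, ∑ a2, N a a2 * X (a2, b) (a, b) := fun b => ptraceA_kron_mul N X b b
  rw [Finset.sum_congr rfl fun b _ => this b]
  have hrhs : ∀ a, (N * ptraceB X).diag a = ∑ a2, ∑ b, N a a2 * X (a2, b) (a, b) := by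
    intro a
    rw [Matrix.diag_apply, Matrix.mul_apply]
    apply Finset.sum_congr rfl
    intro a2 _
    rw [ptraceB_apply, Finset.mul_sum]
  rw [Finset.sum_congr rfl fun a _ => hrhs a]
  rw [Finset.sum_comm]
  exact Finset.sum_congr rfl fun a _ => Finset.sum_comm

lemma sum_kron_one {ι : Type*} [Fintype ι] (M : ι → Matrix (Fin dA) (Fin dA) ℂ) :
    ∑ j, kron (M j) (1 : Matrix (Fin dB) (Fin dB) ℂ)
      = kron (∑ j, M j) (1 : Matrix (Fin dB) (Fin dB) ℂ) := by
  ext p q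
  rw [Matrix.sum_apply]
  simp only [Matrix.kroneckerMap_apply]
  rw [Matrix.sum_apply, Finset.sum_mul]

end Kron

section Helpers
variable {n : Type*} [Fintype n] [DecidableEq n]

lemma ofReal_smul_eq (c : ℝ) (X : Matrix n n ℂ) : ((c : ℝ) : ℂ) • X = c • X := by
  ext i j
  simp [Matrix.smul_apply, Complex.real_smul]

lemma trace_re_smul (c : ℝ) (X : Matrix n n ℂ) : (c • X).trace.re = c * X.trace.re := by
  rw [Matrix.trace_smul]
  simp [Complex.real_smul]

lemma psd_real_smul {X : Matrix n n ℂ} (hX : X.PosSemidef) {c : ℝ} (hc : 0 ≤ c) :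
    (c • X).PosSemidef := by
  rw [← ofReal_smul_eq]
  refine Matrix.PosSemidef.of_dotProduct_mulVec_nonneg ?_ ?_
  · unfold Matrix.IsHermitian
    rw [Matrix.conjTranspose_smul, hX.1.eq]
    congr 1
    exact Complex.conj_ofReal c
  · intro x
    rw [Matrix.smul_mulVec, dotProduct_smul]
    have h := hX.dotProduct_mulVec_nonneg x
    rw [Complex.nonneg_iff] at h ⊢
    constructor
    · simp only [smul_eq_mul, Complex.mul_re, Complex.ofReal_re, Complex.ofReal_im, zero_mul,
        sub_zero]
      exact mul_nonneg hc h.1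
    · simp only [smul_eq_mul, Complex.mul_im, Complex.ofReal_re, Complex.ofReal_im, zero_mul,
        add_zero]
      rw [← h.2]
      ring

lemma psd_sum {ι : Type*} (s : Finset ι) (f : ι → Matrix n n ℂ)
    (h : ∀ i ∈ s, (f i).PosSemidef) : (∑ i ∈ s, f i).PosSemidef := by
  classical
  induction s using Finset.induction_on with
  | empty => simpa using Matrix.PosSemidef.zero
  | insert a t hx ih =>
      rw [Finset.sum_insert hx]
      exact (h a (Finset.mem_insert_self a t)).add
        (ih fun i hi => h i (Finset.mem_insert_of_mem hi))

/-- Per-block computation for the relative-entropy trace. -/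
lemma block_term {Aj ρB ρcj : Matrix n n ℂ} (hAj : Aj.PosSemidef)
    (hρB : ρB.PosSemidef) (hle : (ρB - Aj).PosSemidef) {p V : ℝ}
    (htr : Aj.trace = ((p : ℝ) : ℂ)) (hp : 0 < p) (hV : 0 < V)
    (hρcj : ρcj = p⁻¹ • Aj) :
    (Aj * (matLog Aj - matLog (V • ρB))).trace.re
      = p * Real.log (p / V) - p * vnEntropy ρcj - (Aj * matLog ρB).trace.re := by
  have h1 : matLog (V • ρB) = ((Real.log V : ℝ) : ℂ) • matFun chi ρB + matLog ρB :=
    matLog_smul_psd hρB hV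
  have habs : Aj * matFun chi ρB = Aj := (supp_absorb hAj hρB hle).1
  have hofre : ∀ a b : ℝ, (((a : ℝ) : ℂ) * ((b : ℝ) : ℂ)).re = a * b := by
    intro a b
    rw [← Complex.ofReal_mul]
    exact Complex.ofReal_re _
  have h2 : (Aj * matLog (V • ρB)).trace.re
      = Real.log V * p + (Aj * matLog ρB).trace.re := by
    rw [h1, Matrix.mul_add, Matrix.mul_smul, habs, Matrix.trace_add, Matrix.trace_smul,
      Complex.add_re, htr]
    rw [smul_eq_mul, hofre]
  have h3 : matLog ρcj = ((Real.log p⁻¹ : ℝ) : ℂ) • matFun chi Aj + matLog Aj := by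
    rw [hρcj]
    exact matLog_smul_psd hAj (inv_pos.mpr hp)
  have h4 : (Aj * matLog ρcj).trace.re = -(Real.log p) * p + (Aj * matLog Aj).trace.re := by
    rw [h3, Matrix.mul_add, Matrix.mul_smul, psd_mul_chi hAj, Matrix.trace_add,
      Matrix.trace_smul, Complex.add_re, htr, smul_eq_mul, hofre, Real.log_inv]
  have h5 : (Aj * matLog ρcj).trace.re = p * (ρcj * matLog ρcj).trace.re := by
    have : ρcj * matLog ρcj = p⁻¹ • (Aj * matLog ρcj) := by
      rw [hρcj, Matrix.smul_mul]
    rw [this, trace_re_smul]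
    field_simp
  have hvn : p * vnEntropy ρcj = Real.log p * p - (Aj * matLog Aj).trace.re := by
    rw [vnEntropy]
    have := h5.symm
    rw [h4] at this
    -- this : p * (ρcj * matLog ρcj).trace.re = -(Real.log p) * p + (Aj * matLog Aj).trace.re
    have h6 : p * -((ρcj * matLog ρcj).trace.re)
        = Real.log p * p - (Aj * matLog Aj).trace.re := by
      rw [mul_neg, this]
      ring
    exact h6
  have hlog : Real.log (p / V) = Real.log p - Real.log V :=
    Real.log_div (ne_of_gt hp) (ne_of_gt hV)
  rw [Matrix.mul_sub, Matrix.trace_sub, Complex.sub_re, h2, hvn, hlog]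
  ring

end Helpers

end OEAux

theorem condObsEntropy_formula {dA dB : ℕ} {J : Type*} [Fintype J] [DecidableEq J]
    (M : J → Matrix (Fin dA) (Fin dA) ℂ) (hM : IsPOVM M)
    (ρ : Matrix (Fin dA × Fin dB) (Fin dA × Fin dB) ℂ) (hρ : IsState ρ)
    (p : J → ℝ)
    (hp : ∀ j, p j =
      ((Matrix.kroneckerMap (· * ·) (M j) (1 : Matrix (Fin dB) (Fin dB) ℂ)) * ρ).trace.re)
    (ρc : J → Matrix (Fin dB) (Fin dB) ℂ)
    (hρc : ∀ j, 0 < p j → ρc j = (p j)⁻¹ •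
      ptraceA ((Matrix.kroneckerMap (· * ·) (M j) (1 : Matrix (Fin dB) (Fin dB) ℂ)) * ρ)) :
    condObsEntropy M ρ =
      ((obsEntropy M (ptraceB ρ) - vnEntropy (ptraceA ρ)
        + ∑ j, (if 0 < p j then p j * vnEntropy (ρc j) else 0) : ℝ) : EReal) := by
  classical
  obtain ⟨hMpsd, hMsum⟩ := hM
  obtain ⟨hρpsd, hρtr⟩ := hρ
  set ρB := ptraceA ρ with hρBdef
  set A : J → Matrix (Fin dB) (Fin dB) ℂ := fun j =>
    ptraceA ((Matrix.kroneckerMap (· * ·) (M j) (1 : Matrix (Fin dB) (Fin dB) ℂ)) * ρ)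
    with hAdef
  set Vr : J → ℝ := fun j => (M j).trace.re with hVdef
  have hρBpsd : ρB.PosSemidef := OEAux.ptraceA_posSemidef hρpsd
  have hApsd : ∀ j, (A j).PosSemidef := fun j =>
    OEAux.ptraceA_kron_mul_posSemidef (hMpsd j) hρpsd
  have hsumA : ∑ j, A j = ρB := by
    rw [hAdef, ← OEAux.ptraceA_sum, hρBdef]
    congr 1
    rw [← Finset.sum_mul, OEAux.sum_kron_one, hMsum, Matrix.one_kronecker_one, Matrix.one_mul]
  have hle : ∀ j, (ρB - A j).PosSemidef := by
    intro j
    have h : ρB - A j = ∑ k ∈ Finset.univ.erase j, A k := by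
      rw [← hsumA, ← Finset.add_sum_erase Finset.univ A (Finset.mem_univ j)]
      rw [add_sub_cancel_left]
    rw [h]
    exact OEAux.psd_sum _ _ fun k _ => hApsd k
  have htrA : ∀ j, (A j).trace = ((p j : ℝ) : ℂ) := by
    intro j
    have h1 : (A j).trace = ((Matrix.kroneckerMap (· * ·) (M j)
        (1 : Matrix (Fin dB) (Fin dB) ℂ)) * ρ).trace := OEAux.ptraceA_trace _
    rw [OEAux.psd_trace_re (hApsd j)]
    congr 1
    rw [hp j, h1]
  have hpre : ∀ j, (A j).trace.re = p j := fun j => by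
    rw [htrA j]; exact Complex.ofReal_re _
  have hpnonneg : ∀ j, 0 ≤ p j := fun j => by
    rw [← hpre j]; exact OEAux.psd_trace_re_nonneg (hApsd j)
  have hMtr : ∀ j, (M j).trace = ((Vr j : ℝ) : ℂ) := fun j => OEAux.psd_trace_re (hMpsd j)
  have hVnonneg : ∀ j, 0 ≤ Vr j := fun j => OEAux.psd_trace_re_nonneg (hMpsd j)
  have hAzero : ∀ j, Vr j = 0 → A j = 0 := by
    intro j h
    have hM0 : M j = 0 := OEAux.psd_trace_zero (hMpsd j) (by rw [hMtr j, h]; simp)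
    have : (Matrix.kroneckerMap (· * ·) (M j) (1 : Matrix (Fin dB) (Fin dB) ℂ)) * ρ = 0 := by
      rw [hM0, Matrix.zero_kronecker, Matrix.zero_mul]
    rw [hAdef]
    simp only [this]
    ext b b'
    simp [OEAux.ptraceA_apply]
  have hpzeroA : ∀ j, p j = 0 → A j = 0 := fun j h =>
    OEAux.psd_trace_zero (hApsd j) (by rw [htrA j, h]; simp)
  have hpposV : ∀ j, 0 < p j → 0 < Vr j := by
    intro j hpj
    rcases (hVnonneg j).lt_or_eq with h | h
    · exact h
    · exfalso
      have h0 := hAzero j h.symm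
      have : p j = 0 := by rw [← hpre j, h0]; simp
      rw [this] at hpj
      exact lt_irrefl 0 hpj
  have hν : measureA M (Matrix.kroneckerMap (· * ·) (1 : Matrix (Fin dA) (Fin dA) ℂ) ρB)
      = OEAux.blockDiag (fun j => Vr j • ρB) := by
    rw [OEAux.measureA_eq_blockDiag]
    exact congrArg OEAux.blockDiag (funext fun j => by
      rw [OEAux.kron_mul_kron_one, OEAux.ptraceA_kron, hMtr j, OEAux.ofReal_smul_eq])
  have hμ : measureA M ρ = OEAux.blockDiag A := OEAux.measureA_eq_blockDiag M ρ
  have hμpsd : (OEAux.blockDiag A).PosSemidef := OEAux.blockDiag_posSemidef hApsd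
  have hνblockpsd : ∀ j, (Vr j • ρB).PosSemidef := fun j =>
    OEAux.psd_real_smul hρBpsd (hVnonneg j)
  have hνpsd : (OEAux.blockDiag (fun j => Vr j • ρB)).PosSemidef :=
    OEAux.blockDiag_posSemidef hνblockpsd
  have hsupp : OEAux.matFun OEAux.chi (OEAux.blockDiag (fun j => Vr j • ρB)) *
      OEAux.blockDiag A = OEAux.blockDiag A := by
    rw [OEAux.matFun_blockDiag _ (fun j => (hνblockpsd j).1), OEAux.blockDiag_mul]
    refine congrArg OEAux.blockDiag (funext fun j => ?_)
    rcases (hVnonneg j).lt_or_eq with h | h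
    · rw [OEAux.matFun_chi_smul hρBpsd h]
      exact (OEAux.supp_absorb (hApsd j) hρBpsd (hle j)).2
    · rw [hAzero j h.symm, Matrix.mul_zero]
  have hrange := OEAux.range_le_of_supp hνpsd hsupp
  have hlogμ : matLog (OEAux.blockDiag A) = OEAux.blockDiag (fun j => matLog (A j)) := by
    rw [OEAux.matLog_eq_matFun, OEAux.matFun_blockDiag _ (fun j => (hApsd j).1)]
    rfl
  have hlogν : matLog (OEAux.blockDiag (fun j => Vr j • ρB))
      = OEAux.blockDiag (fun j => matLog (Vr j • ρB)) := by
    rw [OEAux.matLog_eq_matFun, OEAux.matFun_blockDiag _ (fun j => (hνblockpsd j).1)]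
    rfl
  have hT : ((OEAux.blockDiag A) * (matLog (OEAux.blockDiag A)
        - matLog (OEAux.blockDiag (fun j => Vr j • ρB)))).trace.re
      = ∑ j, (A j * (matLog (A j) - matLog (Vr j • ρB))).trace.re := by
    rw [hlogμ, hlogν, OEAux.blockDiag_sub, OEAux.blockDiag_mul, OEAux.blockDiag_trace,
      Complex.re_sum]
  have hterm : ∀ j, (A j * (matLog (A j) - matLog (Vr j • ρB))).trace.re
      = p j * Real.log (p j / Vr j)
        - (if 0 < p j then p j * vnEntropy (ρc j) else 0)
        - (A j * matLog ρB).trace.re := by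
    intro j
    rcases (hpnonneg j).lt_or_eq with hpj | hpj
    · rw [if_pos hpj]
      exact OEAux.block_term (hApsd j) hρBpsd (hle j) (htrA j) hpj (hpposV j hpj) (hρc j hpj)
    · have hA0 := hpzeroA j hpj.symm
      rw [if_neg (by rw [← hpj]; exact lt_irrefl 0), ← hpj, hA0]
      simp
  have hsumlog : ∑ j, (A j * matLog ρB).trace.re = (ρB * matLog ρB).trace.re := by
    rw [← Complex.re_sum, ← Matrix.trace_sum, ← Finset.sum_mul, hsumA]
  have hobs : obsEntropy M (ptraceB ρ) = -∑ j, p j * Real.log (p j / Vr j) := by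
    rw [obsEntropy]
    congr 1
    apply Finset.sum_congr rfl
    intro j _
    have h : (M j * ptraceB ρ).trace.re = p j := by
      rw [hp j, OEAux.kron_mul_trace]
    rw [h]
  have hfinal : (∑ j, (A j * (matLog (A j) - matLog (Vr j • ρB))).trace.re)
      = -(obsEntropy M (ptraceB ρ) - vnEntropy ρB
        + ∑ j, (if 0 < p j then p j * vnEntropy (ρc j) else 0)) := by
    rw [Finset.sum_congr rfl fun j _ => hterm j, Finset.sum_sub_distrib,
      Finset.sum_sub_distrib, hsumlog, hobs, vnEntropy]
    ring
  rw [condObsEntropy, hμ, hν, qRelEntropy, if_pos ⟨hμpsd.1, hνpsd.1, hrange⟩, hT, hfinal]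
  rw [EReal.coe_neg, neg_neg]
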